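/- Let M : ℕ → ℝ be positive with M 0 = 1, satisfying (M.1) and (M.2): there exist C, H ≥ 1 with M (p+q) ≤ C H^(p+q) M p M q for all p, q. Then the associated function satisfies 2 ω_M(ρ) ≤ ω_M(H ρ) + log C for all ρ ≥ 0. -/

import Mathlib

/-- The associated function `ω_M(ρ) = sup_{p} log(ρ^p / M p)`, valued in the
extended reals so that the supremum is always meaningful. -/
noncomputable def assocFunE (M : ℕ → ℝ) (ρ : ℝ) : EReal :=
  ⨆ p : ℕ, (Real.log (ρ ^ p / M p) : EReal)

lemma two_mul_EReal_le (x : EReal) (hx : x ≠ ⊥) : 2 * x ≤ x + x := by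
  induction x with
  | bot => simp at hx
  | coe s =>
      have : ((2 * s : ℝ) : EReal) = 2 * (s : EReal) := by
        rw [EReal.coe_mul]; norm_cast
      rw [← this, ← EReal.coe_add, EReal.coe_le_coe_iff]; linarith
  | top => rw [EReal.mul_top_of_pos (by norm_num), EReal.top_add_top]

/-- If `M` is positive with `M 0 = 1`, satisfies (M.1) and (M.2) with constants
`C, H ≥ 1`, then `2 ω_M(ρ) ≤ ω_M(H ρ) + log C` for all `ρ ≥ 0`. -/
theorem two_mul_assocFun_le (M : ℕ → ℝ) (hpos : ∀ p, 0 < M p) (h0 : M 0 = 1)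
    (hM1 : ∀ p, 1 ≤ p → (M p) ^ 2 ≤ M (p - 1) * M (p + 1))
    (C H : ℝ) (hC : 1 ≤ C) (hH : 1 ≤ H)
    (hM2 : ∀ p q : ℕ, M (p + q) ≤ C * H ^ (p + q) * M p * M q) :
    ∀ ρ : ℝ, 0 ≤ ρ →
      2 * assocFunE M ρ ≤ assocFunE M (H * ρ) + (Real.log C : EReal) := by
  intro ρ hρ
  set S := assocFunE M ρ with hS
  set T := assocFunE M (H * ρ) + (Real.log C : EReal) with hT
  -- the key pointwise real inequality
  have key : ∀ p q : ℕ, Real.log (ρ ^ p / M p) + Real.log (ρ ^ q / M q) ≤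
      Real.log ((H * ρ) ^ (p + q) / M (p + q)) + Real.log C := by
    intro p q
    rcases eq_or_lt_of_le hρ with h0ρ | h0ρ
    · -- ρ = 0
      have hlogC : 0 ≤ Real.log C := Real.log_nonneg hC
      have hterm : ∀ n : ℕ, Real.log ((0:ℝ) ^ n / M n) = 0 := by
        intro n
        cases n with
        | zero => simp [h0]
        | succ k => simp [zero_pow (Nat.succ_ne_zero k)]
      have hterm' : ∀ n : ℕ, Real.log ((H * 0) ^ n / M n) = 0 := by
        intro n; rw [mul_zero]; exact hterm n
      rw [← h0ρ, hterm p, hterm q, hterm' (p + q)]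
      linarith
    · -- ρ > 0
      have hMp := hpos p
      have hMq := hpos q
      have hMpq := hpos (p + q)
      have hρp : 0 < ρ ^ p := pow_pos h0ρ p
      have hρq : 0 < ρ ^ q := pow_pos h0ρ q
      have hHρ : 0 < H * ρ := mul_pos (lt_of_lt_of_le one_pos hH) h0ρ
      have hHρpq : 0 < (H * ρ) ^ (p + q) := pow_pos hHρ _
      have hle : ρ ^ (p + q) / (M p * M q) ≤ C * ((H * ρ) ^ (p + q) / M (p + q)) := by
        rw [← mul_div_assoc, div_le_div_iff₀ (mul_pos hMp hMq) hMpq]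
        calc ρ ^ (p + q) * M (p + q)
            ≤ ρ ^ (p + q) * (C * H ^ (p + q) * M p * M q) :=
              mul_le_mul_of_nonneg_left (hM2 p q) (pow_pos h0ρ _).le
          _ = C * (H * ρ) ^ (p + q) * (M p * M q) := by rw [mul_pow]; ring
      calc Real.log (ρ ^ p / M p) + Real.log (ρ ^ q / M q)
          = Real.log (ρ ^ (p + q) / (M p * M q)) := by
            rw [← Real.log_mul (ne_of_gt (div_pos hρp hMp)) (ne_of_gt (div_pos hρq hMq))]
            congr 1
            rw [pow_add]
            field_simp
        _ ≤ Real.log (C * ((H * ρ) ^ (p + q) / M (p + q))) :=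
            Real.log_le_log (div_pos (pow_pos h0ρ _) (mul_pos hMp hMq)) hle
        _ = Real.log ((H * ρ) ^ (p + q) / M (p + q)) + Real.log C := by
            rw [Real.log_mul (ne_of_gt (lt_of_lt_of_le one_pos hC))
              (ne_of_gt (div_pos hHρpq hMpq))]
            ring
  -- pointwise bound in EReal
  have keyE : ∀ p q : ℕ, (Real.log (ρ ^ p / M p) : EReal) +
      (Real.log (ρ ^ q / M q) : EReal) ≤ T := by
    intro p q
    calc ((Real.log (ρ ^ p / M p) : ℝ) : EReal) + (Real.log (ρ ^ q / M q) : ℝ)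
        = ((Real.log (ρ ^ p / M p) + Real.log (ρ ^ q / M q) : ℝ) : EReal) := by
          rw [EReal.coe_add]
      _ ≤ ((Real.log ((H * ρ) ^ (p + q) / M (p + q)) + Real.log C : ℝ) : EReal) := by
          exact_mod_cast key p q
      _ = (Real.log ((H * ρ) ^ (p + q) / M (p + q)) : EReal) + (Real.log C : EReal) := by
          rw [EReal.coe_add]
      _ ≤ T := by
          apply add_le_add_left
          exact le_iSup (fun n : ℕ => (Real.log ((H * ρ) ^ n / M n) : EReal)) (p + q)
  have hSS : S + S ≤ T := by
    apply EReal.add_le_of_forall_lt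
    intro a ha b hb
    rw [hS, assocFunE, lt_iSup_iff] at ha hb
    obtain ⟨p, hp⟩ := ha
    obtain ⟨q, hq⟩ := hb
    exact le_trans (add_le_add hp.le hq.le) (keyE p q)
  -- S is not ⊥ since the p = 0 term is 0
  have hS0 : (0 : EReal) ≤ S := by
    rw [hS, assocFunE]
    have h := le_iSup (fun n : ℕ => (Real.log (ρ ^ n / M n) : EReal)) 0
    simpa [h0] using h
  exact le_trans (two_mul_EReal_le S (fun hbot => by simp [hbot] at hS0)) hSS
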